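/- Let n, p be positive integers, X an n×p real matrix, B a p×p symmetric positive definite matrix, b ∈ ℝᵖ, y ∈ {0,1}ⁿ, d ∈ ℝᵖ, C a p×p symmetric positive definite matrix, and ν > 0. There exists a finite constant M > 0 such that for all β ∈ ℝᵖ and all w ∈ (0,∞)ⁿ, π(β|w) / h_ν(β; d, C) ≤ M · det(XᵀΩ(w)X + B⁻¹)^{1/2}, where π(β|w) = (2π)^{−p/2} det(Σ(w))^{−1/2} exp{−(1/2)(β−μ(w))ᵀ Σ(w)⁻¹ (β−μ(w))}. -/

import Mathlib

open MeasureTheory Matrix Real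

/-- The density of the Pólya-Gamma PG(1,0) distribution. -/
noncomputable def pgDensity (z : ℝ) : ℝ :=
  ∑' k : ℕ, (-1 : ℝ) ^ k * (2 * (k : ℝ) + 1) / Real.sqrt (2 * Real.pi * z ^ 3) *
    Real.exp (-(2 * (k : ℝ) + 1) ^ 2 / (8 * z))

/-- Σ(w) = (Xᵀ Ω(w) X + B⁻¹)⁻¹, with Ω(w) = diag(w₁,…,wₙ). -/
noncomputable def sigmaMat {n p : ℕ} (X : Matrix (Fin n) (Fin p) ℝ)
    (B : Matrix (Fin p) (Fin p) ℝ) (w : Fin n → ℝ) : Matrix (Fin p) (Fin p) ℝ :=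
  (Xᵀ * Matrix.diagonal w * X + B⁻¹)⁻¹

/-- μ(w) = Σ(w)[Xᵀ(y − (1/2)1ₙ) + B⁻¹b]. -/
noncomputable def muVec {n p : ℕ} (X : Matrix (Fin n) (Fin p) ℝ)
    (B : Matrix (Fin p) (Fin p) ℝ) (b : Fin p → ℝ) (y : Fin n → ℝ) (w : Fin n → ℝ) :
    Fin p → ℝ :=
  (sigmaMat X B w) *ᵥ (Xᵀ *ᵥ (fun i => y i - 1 / 2) + B⁻¹ *ᵥ b)

/-- π(β|w) : the N_p(μ(w), Σ(w)) density at β. -/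
noncomputable def piBeta {n p : ℕ} (X : Matrix (Fin n) (Fin p) ℝ)
    (B : Matrix (Fin p) (Fin p) ℝ) (b : Fin p → ℝ) (y : Fin n → ℝ)
    (w : Fin n → ℝ) (β : Fin p → ℝ) : ℝ :=
  (2 * Real.pi) ^ (-(p : ℝ) / 2) * (sigmaMat X B w).det ^ (-(1 : ℝ) / 2) *
    Real.exp (-(1 / 2) *
      ((β - muVec X B b y w) ⬝ᵥ ((sigmaMat X B w)⁻¹ *ᵥ (β - muVec X B b y w))))

/-- π(w|β) = ∏ᵢ cosh(|xᵢᵀβ|/2) exp{−(xᵢᵀβ)² wᵢ/2} g(wᵢ). -/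
noncomputable def piW {n p : ℕ} (X : Matrix (Fin n) (Fin p) ℝ)
    (w : Fin n → ℝ) (β : Fin p → ℝ) : ℝ :=
  ∏ i, (Real.cosh (|(X *ᵥ β) i| / 2) * Real.exp (-((X *ᵥ β) i) ^ 2 * w i / 2) *
    pgDensity (w i))

/-- The p-dimensional Student's t density with location d, scale matrix C and
degrees of freedom ν. -/
noncomputable def studentT {p : ℕ} (ν : ℝ) (d : Fin p → ℝ)
    (C : Matrix (Fin p) (Fin p) ℝ) (β : Fin p → ℝ) : ℝ :=
  (Real.Gamma ((ν + p) / 2) /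
      (Real.Gamma (ν / 2) * ν ^ ((p : ℝ) / 2) * Real.pi ^ ((p : ℝ) / 2) *
        Real.sqrt C.det)) *
    (1 + (1 / ν) * ((β - d) ⬝ᵥ (C⁻¹ *ᵥ (β - d)))) ^ (-(ν + p) / 2)

section helpers

lemma dot_le' {p : ℕ} (x z : Fin p → ℝ) : x ⬝ᵥ z ≤ p * (‖x‖ * ‖z‖) := by
  calc x ⬝ᵥ z ≤ ∑ i, |x i * z i| := Finset.sum_le_sum fun i _ => le_abs_self _
    _ ≤ ∑ _i : Fin p, ‖x‖ * ‖z‖ := by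
        refine Finset.sum_le_sum fun i _ => ?_
        rw [abs_mul]
        exact mul_le_mul (norm_le_pi_norm x i) (norm_le_pi_norm z i) (abs_nonneg _)
          (norm_nonneg _)
    _ = p * (‖x‖ * ‖z‖) := by simp [Finset.sum_const, mul_comm]

lemma quad_smul' {p : ℕ} (M : Matrix (Fin p) (Fin p) ℝ) (a : ℝ) (x : Fin p → ℝ) :
    (a • x) ⬝ᵥ M *ᵥ (a • x) = a ^ 2 * (x ⬝ᵥ M *ᵥ x) := by
  rw [mulVec_smul, smul_dotProduct, dotProduct_smul, smul_eq_mul, smul_eq_mul]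
  ring

lemma quad_cont' {p : ℕ} (M : Matrix (Fin p) (Fin p) ℝ) :
    Continuous fun x : Fin p → ℝ => x ⬝ᵥ M *ᵥ x := by
  unfold dotProduct mulVec
  exact continuous_finset_sum _ fun i _ => (continuous_apply i).mul
    (continuous_finset_sum _ fun j _ => continuous_const.mul (continuous_apply j))

lemma quad_lower' {p : ℕ} (hp : 0 < p) (M : Matrix (Fin p) (Fin p) ℝ) (hM : M.PosDef) :
    ∃ c : ℝ, 0 < c ∧ ∀ x : Fin p → ℝ, c * ‖x‖ ^ 2 ≤ x ⬝ᵥ M *ᵥ x := by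
  haveI : Nonempty (Fin p) := ⟨⟨0, hp⟩⟩
  have hS : IsCompact (Metric.sphere (0 : Fin p → ℝ) 1) := isCompact_sphere _ _
  have hne : (Metric.sphere (0 : Fin p → ℝ) 1).Nonempty :=
    NormedSpace.sphere_nonempty.mpr zero_le_one
  obtain ⟨x₀, hx₀S, hx₀min⟩ := hS.exists_isMinOn hne (quad_cont' M).continuousOn
  have hx₀ : x₀ ≠ 0 := by
    intro h
    simp [h] at hx₀S
  refine ⟨x₀ ⬝ᵥ M *ᵥ x₀, by simpa [star_trivial] using hM.dotProduct_mulVec_pos hx₀, fun x => ?_⟩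
  rcases eq_or_ne x 0 with rfl | hx
  · simp
  · have hnx : ‖x‖ ≠ 0 := norm_ne_zero_iff.mpr hx
    have hu : (‖x‖⁻¹ • x) ∈ Metric.sphere (0 : Fin p → ℝ) 1 := by
      simp [norm_smul, abs_of_nonneg (inv_nonneg.mpr (norm_nonneg x)),
        inv_mul_cancel₀ hnx]
    have h2 : x₀ ⬝ᵥ M *ᵥ x₀ ≤ ‖x‖⁻¹ ^ 2 * (x ⬝ᵥ M *ᵥ x) := by
      have h := hx₀min hu
      simp only [Set.mem_setOf_eq, quad_smul'] at h
      exact h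
    have hn2 : (0:ℝ) < ‖x‖ ^ 2 := by positivity
    calc (x₀ ⬝ᵥ M *ᵥ x₀) * ‖x‖ ^ 2 ≤ (‖x‖⁻¹ ^ 2 * (x ⬝ᵥ M *ᵥ x)) * ‖x‖ ^ 2 :=
          mul_le_mul_of_nonneg_right h2 hn2.le
      _ = x ⬝ᵥ M *ᵥ x := by field_simp

lemma quad_upper' {p : ℕ} (M : Matrix (Fin p) (Fin p) ℝ) :
    ∃ K : ℝ, 0 ≤ K ∧ ∀ x : Fin p → ℝ, x ⬝ᵥ M *ᵥ x ≤ K * ‖x‖ ^ 2 := by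
  refine ⟨∑ i, ∑ j, |M i j|, by positivity, fun x => ?_⟩
  have h : ∀ i j, x i * (M i j * x j) ≤ |M i j| * ‖x‖ ^ 2 := by
    intro i j
    calc x i * (M i j * x j) ≤ |x i * (M i j * x j)| := le_abs_self _
      _ = |M i j| * (|x i| * |x j|) := by rw [abs_mul, abs_mul]; ring
      _ ≤ |M i j| * (‖x‖ * ‖x‖) := by
          refine mul_le_mul_of_nonneg_left ?_ (abs_nonneg _)
          exact mul_le_mul (norm_le_pi_norm x i) (norm_le_pi_norm x j) (abs_nonneg _)
            (norm_nonneg _)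
      _ = |M i j| * ‖x‖ ^ 2 := by ring
  calc x ⬝ᵥ M *ᵥ x = ∑ i, ∑ j, x i * (M i j * x j) := by
        simp [dotProduct, mulVec, Finset.mul_sum]
    _ ≤ ∑ i, ∑ j, |M i j| * ‖x‖ ^ 2 :=
        Finset.sum_le_sum fun i _ => Finset.sum_le_sum fun j _ => h i j
    _ = (∑ i, ∑ j, |M i j|) * ‖x‖ ^ 2 := by rw [Finset.sum_mul]; simp [Finset.sum_mul]

lemma rpow_one_add_le' {x s ε : ℝ} (hx : 0 ≤ x) (hε : 0 < ε) (hε1 : ε ≤ 1) (hs : 0 ≤ s) :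
    (1 + x) ^ s ≤ ε ^ (-s) * Real.exp (s * (ε * x)) := by
  have h1x : (0:ℝ) < 1 + x := by linarith
  have hlog : Real.log (1 + x) ≤ ε * x - Real.log ε := by
    have h2 : (1:ℝ) + x ≤ (1 + ε * x) / ε := by
      rw [le_div_iff₀ hε]; nlinarith
    have h3 : Real.log (1 + x) ≤ Real.log ((1 + ε * x) / ε) :=
      Real.log_le_log h1x h2
    rw [Real.log_div (by nlinarith) hε.ne'] at h3
    have h4 : Real.log (1 + ε * x) ≤ ε * x := by
      have := Real.log_le_sub_one_of_pos (show (0:ℝ) < 1 + ε * x by nlinarith)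
      linarith
    linarith
  calc (1 + x) ^ s = Real.exp (s * Real.log (1 + x)) := by
        rw [Real.rpow_def_of_pos h1x, mul_comm]
    _ ≤ Real.exp (s * (ε * x - Real.log ε)) :=
        Real.exp_le_exp.mpr (mul_le_mul_of_nonneg_left hlog hs)
    _ = ε ^ (-s) * Real.exp (s * (ε * x)) := by
        rw [Real.rpow_def_of_pos hε, ← Real.exp_add]; ring_nf

end helpers

/-- There is a constant M > 0 with
π(β|w)/h_ν(β; d, C) ≤ M · det(XᵀΩ(w)X + B⁻¹)^{1/2} for all β ∈ ℝᵖ and w ∈ (0,∞)ⁿ. -/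
theorem stmt7 {n p : ℕ} (hn : 0 < n) (hp : 0 < p)
    (X : Matrix (Fin n) (Fin p) ℝ) (B : Matrix (Fin p) (Fin p) ℝ) (hB : B.PosDef)
    (b : Fin p → ℝ) (y : Fin n → ℝ) (hy : ∀ i, y i = 0 ∨ y i = 1)
    (d : Fin p → ℝ) (C : Matrix (Fin p) (Fin p) ℝ) (hC : C.PosDef) (ν : ℝ) (hν : 0 < ν) :
    ∃ M : ℝ, 0 < M ∧ ∀ (β : Fin p → ℝ) (w : Fin n → ℝ), (∀ i, 0 < w i) →
      piBeta X B b y w β / studentT ν d C β ≤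
        M * Real.sqrt ((Xᵀ * Matrix.diagonal w * X + B⁻¹).det) := by
  obtain ⟨c, hc, hcl⟩ := quad_lower' hp B⁻¹ hB.inv
  obtain ⟨K, hK0, hKu⟩ := quad_upper' (C⁻¹ : Matrix (Fin p) (Fin p) ℝ)
  set v : Fin p → ℝ := Xᵀ *ᵥ (fun i => y i - 1 / 2) + B⁻¹ *ᵥ b with hv
  set s : ℝ := (ν + p) / 2 with hs_def
  have hs : 0 < s := by positivity
  set R : ℝ := p * ‖v‖ / c + ‖d‖ with hR
  have hR0 : 0 ≤ R := by positivity
  set ε : ℝ := min 1 (c * ν / (4 * s * (K + 1))) with hε_def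
  have hε : 0 < ε := lt_min one_pos (by positivity)
  have hε1 : ε ≤ 1 := min_le_left _ _
  have hkey : s * ε * (2 * K) / ν ≤ c / 2 := by
    have h2 : ε ≤ c * ν / (4 * s * (K + 1)) := min_le_right _ _
    rw [le_div_iff₀ (by positivity)] at h2
    rw [div_le_iff₀ hν]
    nlinarith [mul_pos hs hε]
  set M₀ : ℝ := ε ^ (-s) * Real.exp (s * (ε * (2 * K * R ^ 2) / ν)) with hM₀
  have hM₀pos : 0 < M₀ := mul_pos (Real.rpow_pos_of_pos hε _) (Real.exp_pos _)
  set T₀ : ℝ := Real.Gamma ((ν + p) / 2) /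
      (Real.Gamma (ν / 2) * ν ^ ((p : ℝ) / 2) * Real.pi ^ ((p : ℝ) / 2) *
        Real.sqrt C.det) with hT₀def
  have hT₀ : 0 < T₀ := by
    refine div_pos (Real.Gamma_pos_of_pos (by positivity)) ?_
    have h1 : 0 < Real.Gamma (ν / 2) := Real.Gamma_pos_of_pos (by positivity)
    have h2 : (0:ℝ) < ν ^ ((p : ℝ) / 2) := Real.rpow_pos_of_pos hν _
    have h3 : (0:ℝ) < Real.pi ^ ((p : ℝ) / 2) := Real.rpow_pos_of_pos Real.pi_pos _
    have h4 : (0:ℝ) < Real.sqrt C.det := Real.sqrt_pos.mpr hC.det_pos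
    positivity
  clear_value s R ε M₀ T₀
  refine ⟨(2 * Real.pi) ^ (-(p : ℝ) / 2) / T₀ * M₀,
    mul_pos (div_pos (Real.rpow_pos_of_pos (by positivity) _) hT₀) hM₀pos,
    fun β w hw => ?_⟩
  set A : Matrix (Fin p) (Fin p) ℝ := Xᵀ * Matrix.diagonal w * X + B⁻¹ with hA_def
  have hSps : (Xᵀ * Matrix.diagonal w * X).PosSemidef := by
    have hD : (Matrix.diagonal w).PosSemidef :=
      Matrix.PosSemidef.diagonal (fun i => (hw i).le)
    have := hD.conjTranspose_mul_mul_same X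
    rwa [Matrix.conjTranspose_eq_transpose_of_trivial] at this
  have hA : A.PosDef := Matrix.PosDef.posSemidef_add hSps hB.inv
  have hdet : 0 < A.det := hA.det_pos
  have hu : IsUnit A.det := hdet.ne'.isUnit
  have hSig : sigmaMat X B w = A⁻¹ := by rw [hA_def]; rfl
  have hSiginv : (sigmaMat X B w)⁻¹ = A := by
    rw [hSig]; exact Matrix.nonsing_inv_nonsing_inv A hu
  set μ : Fin p → ℝ := muVec X B b y w with hμ_def
  have hμv : μ = A⁻¹ *ᵥ v := by
    rw [hμ_def, muVec, hSig, hv]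
  have hAμ : A *ᵥ μ = v := by
    rw [hμv, Matrix.mulVec_mulVec, Matrix.mul_nonsing_inv A hu, Matrix.one_mulVec]
  have hsplit : ∀ x : Fin p → ℝ, c * ‖x‖ ^ 2 ≤ x ⬝ᵥ A *ᵥ x := by
    intro x
    have h1 : x ⬝ᵥ A *ᵥ x = x ⬝ᵥ (Xᵀ * Matrix.diagonal w * X) *ᵥ x + x ⬝ᵥ B⁻¹ *ᵥ x := by
      rw [hA_def, Matrix.add_mulVec, dotProduct_add]
    have h2 : 0 ≤ x ⬝ᵥ (Xᵀ * Matrix.diagonal w * X) *ᵥ x := by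
      simpa [star_trivial] using hSps.dotProduct_mulVec_nonneg x
    have h3 := hcl x
    linarith
  have hμR : ‖μ‖ ≤ p * ‖v‖ / c := by
    have h1 : c * ‖μ‖ ^ 2 ≤ μ ⬝ᵥ v := by
      have := hsplit μ
      rwa [hAμ] at this
    have h2 : μ ⬝ᵥ v ≤ p * (‖μ‖ * ‖v‖) := dot_le' μ v
    rcases eq_or_lt_of_le (norm_nonneg μ) with h0 | h0
    · rw [← h0]; positivity
    · rw [le_div_iff₀ hc]
      nlinarith
  set Q : ℝ := (β - μ) ⬝ᵥ A *ᵥ (β - μ) with hQ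
  have hpi : piBeta X B b y w β =
      (2 * Real.pi) ^ (-(p : ℝ) / 2) * Real.sqrt A.det * Real.exp (-(1 / 2) * Q) := by
    rw [piBeta, hSiginv, ← hμ_def, ← hQ, hSig, Matrix.det_nonsing_inv, Ring.inverse_eq_inv']
    congr 2
    rw [Real.sqrt_eq_rpow, Real.inv_rpow hdet.le]
    rw [show (-(1:ℝ)/2) = -(1/2 : ℝ) by norm_num, Real.rpow_neg hdet.le, inv_inv]
  set q : ℝ := (β - d) ⬝ᵥ C⁻¹ *ᵥ (β - d) with hq_def
  clear_value μ Q
  have hq0 : 0 ≤ q := by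
    have h := hC.inv.posSemidef.dotProduct_mulVec_nonneg (β - d)
    rw [star_trivial] at h
    rw [hq_def]
    exact h
  clear_value q
  have hbase : (0:ℝ) < 1 + 1 / ν * q := by
    have : (0:ℝ) ≤ 1 / ν * q := by positivity
    linarith
  have hst : studentT ν d C β = T₀ * (1 + 1 / ν * q) ^ (-s) := by
    rw [studentT, ← hT₀def, ← hq_def, neg_div, ← hs_def]
  have hQl : c * ‖β - μ‖ ^ 2 ≤ Q := by rw [hQ]; exact hsplit (β - μ)
  have hbd : ‖β - d‖ ≤ ‖β - μ‖ + R := by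
    have h1 : ‖β - d‖ ≤ ‖β - μ‖ + ‖μ - d‖ := by
      calc ‖β - d‖ = ‖(β - μ) + (μ - d)‖ := by rw [sub_add_sub_cancel]
        _ ≤ ‖β - μ‖ + ‖μ - d‖ := norm_add_le _ _
    have h2 : ‖μ - d‖ ≤ ‖μ‖ + ‖d‖ := norm_sub_le _ _
    rw [hR]
    linarith
  have hqb : q ≤ 2 * K * ‖β - μ‖ ^ 2 + 2 * K * R ^ 2 := by
    have h1 : q ≤ K * ‖β - d‖ ^ 2 := by rw [hq_def]; exact hKu (β - d)
    have h2 : ‖β - d‖ ^ 2 ≤ (‖β - μ‖ + R) ^ 2 := by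
      nlinarith only [norm_nonneg (β - d), norm_nonneg (β - μ), hbd, hR0]
    have h3 := mul_le_mul_of_nonneg_left h2 hK0
    have h4 : K * (‖β - μ‖ + R) ^ 2 ≤ 2 * K * ‖β - μ‖ ^ 2 + 2 * K * R ^ 2 := by
      nlinarith only [sq_nonneg (‖β - μ‖ - R), hK0, mul_nonneg hK0 (sq_nonneg (‖β - μ‖ - R))]
    linarith only [h1, h3, h4]
  have hE : Real.exp (-(1 / 2) * Q) * (1 + 1 / ν * q) ^ s ≤ M₀ := by
    have h1 : (1 + 1 / ν * q) ^ s ≤ ε ^ (-s) * Real.exp (s * (ε * (1 / ν * q))) :=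
      rpow_one_add_le' (by positivity) hε hε1 hs.le
    calc Real.exp (-(1 / 2) * Q) * (1 + 1 / ν * q) ^ s
        ≤ Real.exp (-(1 / 2) * Q) * (ε ^ (-s) * Real.exp (s * (ε * (1 / ν * q)))) :=
          mul_le_mul_of_nonneg_left h1 (Real.exp_pos _).le
      _ = ε ^ (-s) * Real.exp (-(1 / 2) * Q + s * (ε * (1 / ν * q))) := by
          rw [Real.exp_add]; ring
      _ ≤ ε ^ (-s) * Real.exp (s * (ε * (2 * K * R ^ 2) / ν)) := by
          refine mul_le_mul_of_nonneg_left (Real.exp_le_exp.mpr ?_)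
            (Real.rpow_pos_of_pos hε _).le
          have hb1 : s * (ε * (1 / ν * q)) ≤
              s * ε / ν * (2 * K * ‖β - μ‖ ^ 2 + 2 * K * R ^ 2) := by
            have h3 : (0:ℝ) ≤ s * ε / ν := by positivity
            have := mul_le_mul_of_nonneg_left hqb h3
            calc s * (ε * (1 / ν * q)) = s * ε / ν * q := by ring
              _ ≤ s * ε / ν * (2 * K * ‖β - μ‖ ^ 2 + 2 * K * R ^ 2) := this
          have hb2 : s * ε * (2 * K) / ν * ‖β - μ‖ ^ 2 ≤ c / 2 * ‖β - μ‖ ^ 2 :=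
            mul_le_mul_of_nonneg_right hkey (sq_nonneg _)
          have hb3 : s * ε / ν * (2 * K * ‖β - μ‖ ^ 2 + 2 * K * R ^ 2)
              = s * ε * (2 * K) / ν * ‖β - μ‖ ^ 2 + s * (ε * (2 * K * R ^ 2) / ν) := by
            ring
          linarith only [hb1, hb2, hQl, hb3]
      _ = M₀ := hM₀.symm
  have hdiv : piBeta X B b y w β / studentT ν d C β =
      (2 * Real.pi) ^ (-(p : ℝ) / 2) / T₀ *
        (Real.exp (-(1 / 2) * Q) * (1 + 1 / ν * q) ^ s) * Real.sqrt A.det := by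
    rw [hpi, hst, Real.rpow_neg hbase.le, div_eq_mul_inv, mul_inv, inv_inv,
      div_eq_mul_inv]
    ring
  rw [hdiv]
  have hfac : (2 * Real.pi) ^ (-(p : ℝ) / 2) / T₀ *
      (Real.exp (-(1 / 2) * Q) * (1 + 1 / ν * q) ^ s) ≤
      (2 * Real.pi) ^ (-(p : ℝ) / 2) / T₀ * M₀ :=
    mul_le_mul_of_nonneg_left hE
      (div_pos (Real.rpow_pos_of_pos (by positivity) _) hT₀).le
  exact mul_le_mul_of_nonneg_right hfac (Real.sqrt_nonneg _)
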